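/- Consider an N-player game where each strategy set K_i ⊆ ℝ^{n_i} is convex and each cost function f_i(·, x_{-i}) is continuously differentiable and strongly convex on K_i with constant η_i > 0 for every x_{-i} ∈ K_{-i} (i.e., f_i(y_i, x_{-i}) ≥ f_i(x_i, x_{-i}) + ⟨∇_{x_i} f_i(x_i, x_{-i}), y_i − x_i⟩ + (η_i/2)‖y_i − x_i‖² for all x_i, y_i ∈ K_i). Suppose there exists a differentiable function φ such that: (a) for every player i, all x_i, y_i ∈ K_i and x_{-i} ∈ K_{-i}, if ⟨∇_{x_i} f_i(x_i, x_{-i}), y_i − x_i⟩ < 0 then ⟨∇_{x_i} φ(x_i, x_{-i}), y_i − x_i⟩ ≤ ⟨∇_{x_i} f_i(x_i, x_{-i}), y_i − x_i⟩; and (b) φ has L-Lipschitz continuous gradient on K with L ≤ min_i η_i, so that φ(y) ≤ φ(x) + ⟨∇φ(x), y − x⟩ + (L/2)‖y − x‖² for all x, y ∈ K. Then the game is a generalized ordinal potential game with generalized ordinal potential function φ. -/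
import Mathlib


noncomputable section

/-- The set of joint strategy profiles of a game with strategy sets `K i ⊆ ℝ^{n i}`. -/
def jointK {N : ℕ} {n : Fin N → ℕ}
    (K : ∀ i, Set (EuclideanSpace ℝ (Fin (n i)))) :
    Set (∀ i, EuclideanSpace ℝ (Fin (n i))) :=
  {x | ∀ i, x i ∈ K i}

open RealInnerProductSpace

/-- The partial gradient of `g` with respect to player `i`'s variable, at `x`. -/
noncomputable def blockGrad {N : ℕ} {n : Fin N → ℕ}
    (g : (∀ k, EuclideanSpace ℝ (Fin (n k))) → ℝ)
    (x : ∀ k, EuclideanSpace ℝ (Fin (n k))) (i : Fin N) :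
    EuclideanSpace ℝ (Fin (n i)) :=
  gradient (fun v => g (Function.update x i v)) (x i)

/-- `φ` is a generalized ordinal potential function for the game `(K, f)`. -/
def IsGenOrdinalPotential {N : ℕ} {n : Fin N → ℕ}
    (K : ∀ i, Set (EuclideanSpace ℝ (Fin (n i))))
    (f : Fin N → (∀ i, EuclideanSpace ℝ (Fin (n i))) → ℝ)
    (φ : (∀ i, EuclideanSpace ℝ (Fin (n i))) → ℝ) : Prop :=
  ∀ i : Fin N, ∀ x ∈ jointK K, ∀ xi' ∈ K i,
    f i (Function.update x i xi') - f i x < 0 →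
      φ (Function.update x i xi') - φ x < 0

/-- In a game with convex strategy sets and costs that are continuously
differentiable and `η i`-strongly convex in each player's own variable, if a
differentiable `φ` satisfies (a) the partial-gradient domination condition along
improving directions and (b) the `L`-descent inequality on `K` with `L ≤ min_i η i`,
then `φ` is a generalized ordinal potential function of the game. -/
theorem stmt13 {N : ℕ} {n : Fin N → ℕ}
    (K : ∀ i, Set (EuclideanSpace ℝ (Fin (n i))))
    (f : Fin N → (∀ i, EuclideanSpace ℝ (Fin (n i))) → ℝ)
    (hKconv : ∀ i, Convex ℝ (K i))
    (η : Fin N → ℝ) (hη : ∀ i, 0 < η i)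
    (hfC1 : ∀ (i : Fin N) (x : ∀ k, EuclideanSpace ℝ (Fin (n k))),
      ContDiffOn ℝ 1 (fun v => f i (Function.update x i v)) (K i))
    (hstrong : ∀ i : Fin N, ∀ x ∈ jointK K, ∀ yi ∈ K i,
      f i (Function.update x i yi) ≥
        f i x + ⟪blockGrad (f i) x i, yi - x i⟫ + η i / 2 * ‖yi - x i‖ ^ 2)
    (φ : (∀ i, EuclideanSpace ℝ (Fin (n i))) → ℝ)
    (hφdiff : Differentiable ℝ φ)
    (L : ℝ) (hL : 0 < L) (hLη : ∀ i, L ≤ η i)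
    (ha : ∀ i : Fin N, ∀ x ∈ jointK K, ∀ yi ∈ K i,
      ⟪blockGrad (f i) x i, yi - x i⟫ < 0 →
        ⟪blockGrad φ x i, yi - x i⟫ ≤ ⟪blockGrad (f i) x i, yi - x i⟫)
    (hb : ∀ x ∈ jointK K, ∀ y ∈ jointK K,
      φ y ≤ φ x + (∑ i, ⟪blockGrad φ x i, y i - x i⟫)
        + L / 2 * ∑ i, ‖y i - x i‖ ^ 2) :
    IsGenOrdinalPotential K f φ := by
  intro i x hx xi' hxi' hf
  set y := Function.update x i xi' with hy_def
  have hy : y ∈ jointK K := by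
    intro j
    by_cases h : j = i
    · subst h; simpa [hy_def] using hxi'
    · simpa [hy_def, Function.update_of_ne h] using hx j
  have h1 := hstrong i x hx xi' hxi'
  have hnn : 0 ≤ η i / 2 * ‖xi' - x i‖ ^ 2 := mul_nonneg (by linarith [hη i]) (sq_nonneg _)
  have hgf : ⟪blockGrad (f i) x i, xi' - x i⟫ < 0 := by
    have : f i y - f i x < 0 := hf
    nlinarith
  have h2 := ha i x hx xi' hxi' hgf
  have h3 := hb x hx y hy
  have hsum1 : (∑ j, ⟪blockGrad φ x j, y j - x j⟫)
      = ⟪blockGrad φ x i, xi' - x i⟫ := by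
    rw [Finset.sum_eq_single i]
    · simp [hy_def]
    · intro j _ hj
      simp [hy_def, Function.update_of_ne hj]
    · simp
  have hsum2 : (∑ j, ‖y j - x j‖ ^ 2) = ‖xi' - x i‖ ^ 2 := by
    rw [Finset.sum_eq_single i]
    · simp [hy_def]
    · intro j _ hj
      simp [hy_def, Function.update_of_ne hj]
    · simp
  rw [hsum1, hsum2] at h3
  have hLi := hLη i
  have hsq : 0 ≤ ‖xi' - x i‖ ^ 2 := by positivity
  have : f i y - f i x < 0 := hf
  nlinarith
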